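/- Let E be an infinite-dimensional Banach space over ℝ, let Γ be an index set with card(Γ) > 𝔠 and dim E < card(Γ), and let H = ℓ_2(Γ). If the set 𝓛(E; H) \ Π_1(E; H) of continuous linear operators from E to H that are not absolutely summing is nonempty, then it is (α, card(Γ))-lineable in the space of continuous linear operators from E to H for every cardinal α < card(Γ). -/

import Mathlib

universe v u w

/-- A subset `A` of a real vector space `V` is `β`-lineable if `A ∪ {0}` contains a linear
subspace of `V` of Hamel dimension `β`. -/
def Lineable {V : Type v} [AddCommGroup V] [Module ℝ V] (A : Set V) (β : Cardinal.{v}) : Prop :=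
  ∃ S : Submodule ℝ V, Module.rank ℝ ↥S = β ∧ (S : Set V) ⊆ A ∪ {0}

/-- A subset `A` of a real vector space `V` is `(α, β)`-lineable if `A` is `α`-lineable and
every subspace `W ⊆ A ∪ {0}` with `dim W = α` is contained in a subspace `S` with `dim S = β`
and `W ⊆ S ⊆ A ∪ {0}`. -/
def ABLineable {V : Type v} [AddCommGroup V] [Module ℝ V] (A : Set V)
    (α β : Cardinal.{v}) : Prop :=
  Lineable A α ∧
  ∀ W : Submodule ℝ V, Module.rank ℝ ↥W = α → (W : Set V) ⊆ A ∪ {0} →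
    ∃ S : Submodule ℝ V, W ≤ S ∧ Module.rank ℝ ↥S = β ∧ (S : Set V) ⊆ A ∪ {0}

/-- A continuous linear operator `T : E → F` between real normed spaces is absolutely summing
if for every sequence `(x j)` in `E` such that `∑ j, |φ (x j)| < ∞` for every continuous linear
functional `φ` on `E`, one has `∑ j, ‖T (x j)‖ < ∞`. -/
def AbsolutelySumming {E : Type u} {F : Type w} [NormedAddCommGroup E] [NormedSpace ℝ E]
    [NormedAddCommGroup F] [NormedSpace ℝ F] (T : E →L[ℝ] F) : Prop :=
  ∀ x : ℕ → E, (∀ φ : E →L[ℝ] ℝ, Summable fun j => |φ (x j)|) →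
    Summable fun j => ‖T (x j)‖

noncomputable section Aux16

open Function Set Cardinal
open scoped ENNReal

namespace Aux16

variable {Γ : Type w}

private lemma tp : (0:ℝ) < (2:ℝ≥0∞).toReal := by norm_num

lemma extend_norm_rpow (m : Γ → Γ) (hm : Injective m) (f : Γ → ℝ) (δ : Γ) :
    ‖Function.extend m f 0 δ‖ ^ (2:ℝ≥0∞).toReal
      = Function.extend m (fun σ => ‖f σ‖ ^ (2:ℝ≥0∞).toReal) 0 δ := by
  rcases em (∃ σ, m σ = δ) with ⟨σ, rfl⟩ | h
  · rw [hm.extend_apply, hm.extend_apply]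
  · rw [extend_apply' _ _ _ h, extend_apply' _ _ _ h]
    simp only [Pi.zero_apply, norm_zero]
    rw [Real.zero_rpow (by norm_num)]

lemma memℓp_extend (m : Γ → Γ) (hm : Injective m) (f : lp (fun _ : Γ => ℝ) 2) :
    Memℓp (Function.extend m (⇑f) 0) 2 := by
  apply memℓp_gen
  have hs := (lp.memℓp f).summable tp
  have h2 : Summable (Function.extend m (fun σ => ‖f σ‖ ^ (2:ℝ≥0∞).toReal) 0) :=
    (summable_extend_zero hm).2 hs
  exact h2.congr fun δ => (extend_norm_rpow m hm (⇑f) δ).symm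

def pushLp (m : Γ → Γ) (hm : Injective m) (f : lp (fun _ : Γ => ℝ) 2) :
    lp (fun _ : Γ => ℝ) 2 :=
  ⟨Function.extend m (⇑f) 0, memℓp_extend m hm f⟩

@[simp] lemma pushLp_coe (m : Γ → Γ) (hm : Injective m) (f : lp (fun _ : Γ => ℝ) 2) :
    ⇑(pushLp m hm f) = Function.extend m (⇑f) 0 := rfl

lemma pushLp_norm (m : Γ → Γ) (hm : Injective m) (f : lp (fun _ : Γ => ℝ) 2) :
    ‖pushLp m hm f‖ = ‖f‖ := by
  rw [lp.norm_eq_tsum_rpow tp, lp.norm_eq_tsum_rpow tp]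
  congr 1
  calc ∑' δ, ‖pushLp m hm f δ‖ ^ (2:ℝ≥0∞).toReal
      = ∑' δ, Function.extend m (fun σ => ‖f σ‖ ^ (2:ℝ≥0∞).toReal) 0 δ :=
        tsum_congr fun δ => extend_norm_rpow m hm (⇑f) δ
    _ = ∑' σ, ‖f σ‖ ^ (2:ℝ≥0∞).toReal := tsum_extend_zero hm _

lemma extend_add (m : Γ → Γ) (hm : Injective m) (f g : Γ → ℝ) :
    Function.extend m (f + g) 0 = Function.extend m f 0 + Function.extend m g 0 := by
  funext δ
  rcases em (∃ σ, m σ = δ) with ⟨σ, rfl⟩ | h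
  · simp [hm.extend_apply]
  · simp [extend_apply' _ _ _ h]

lemma extend_smul (m : Γ → Γ) (hm : Injective m) (c : ℝ) (f : Γ → ℝ) :
    Function.extend m (c • f) 0 = c • Function.extend m f 0 := by
  funext δ
  rcases em (∃ σ, m σ = δ) with ⟨σ, rfl⟩ | h
  · simp [hm.extend_apply]
  · simp [extend_apply' _ _ _ h]

def pushCLM (m : Γ → Γ) (hm : Injective m) :
    lp (fun _ : Γ => ℝ) 2 →L[ℝ] lp (fun _ : Γ => ℝ) 2 :=
  LinearMap.mkContinuous
    { toFun := pushLp m hm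
      map_add' := fun f g => by
        apply lp.ext
        simp only [pushLp_coe, lp.coeFn_add]
        exact extend_add m hm _ _
      map_smul' := fun c f => by
        apply lp.ext
        simp only [pushLp_coe, lp.coeFn_smul, RingHom.id_apply]
        exact extend_smul m hm c _ }
    1 (fun f => by rw [one_mul]; exact le_of_eq (pushLp_norm m hm f))

@[simp] lemma pushCLM_coe (m : Γ → Γ) (hm : Injective m) (f : lp (fun _ : Γ => ℝ) 2) :
    ⇑(pushCLM m hm f) = Function.extend m (⇑f) 0 := rfl

lemma pushCLM_norm (m : Γ → Γ) (hm : Injective m) (f : lp (fun _ : Γ => ℝ) 2) :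
    ‖pushCLM m hm f‖ = ‖f‖ := pushLp_norm m hm f

lemma lp_norm_le_norm {f g : lp (fun _ : Γ => ℝ) 2} (h : ∀ δ, ‖f δ‖ ≤ ‖g δ‖) :
    ‖f‖ ≤ ‖g‖ := by
  rw [lp.norm_eq_tsum_rpow tp, lp.norm_eq_tsum_rpow tp]
  apply Real.rpow_le_rpow (tsum_nonneg fun δ => Real.rpow_nonneg (norm_nonneg _) _)
  · exact Summable.tsum_le_tsum (fun δ => Real.rpow_le_rpow (norm_nonneg _) (h δ) (le_of_lt tp))
      ((lp.memℓp f).summable tp) ((lp.memℓp g).summable tp)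
  · norm_num

end Aux16

namespace Aux16

lemma absolutelySumming_zero {E : Type u} {F : Type w} [NormedAddCommGroup E]
    [NormedSpace ℝ E] [NormedAddCommGroup F] [NormedSpace ℝ F] :
    AbsolutelySumming (0 : E →L[ℝ] F) := fun x _ => by
  simpa using (summable_zero : Summable fun _ : ℕ => (0:ℝ))

lemma not_absolutelySumming_of_dominates {E : Type u} {F G : Type w} [NormedAddCommGroup E]
    [NormedSpace ℝ E] [NormedAddCommGroup F] [NormedSpace ℝ F] [NormedAddCommGroup G]
    [NormedSpace ℝ G] (T : E →L[ℝ] F) (S : E →L[ℝ] G) (C : ℝ)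
    (h : ∀ x, ‖T x‖ ≤ C * ‖S x‖) (hT : ¬AbsolutelySumming T) : ¬AbsolutelySumming S := by
  intro hS
  apply hT
  intro x hx
  exact Summable.of_nonneg_of_le (fun j => norm_nonneg _) (fun j => h (x j))
    ((hS x hx).mul_left C)

end Aux16

namespace Aux16

variable {E : Type u} [NormedAddCommGroup E] [NormedSpace ℝ E] {Γ : Type w}

lemma main (T₀ : E →L[ℝ] lp (fun _ : Γ => ℝ) 2) (hT₀ : ¬AbsolutelySumming T₀)
    (W : Submodule ℝ (E →L[ℝ] lp (fun _ : Γ => ℝ) 2))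
    (hW : (W : Set (E →L[ℝ] lp (fun _ : Γ => ℝ) 2)) ⊆ {T | ¬AbsolutelySumming T} ∪ {0})
    (J : Set Γ) (hWJ : ∀ w ∈ W, ∀ x : E, ∀ δ ∉ J, (w x : ∀ _ : Γ, ℝ) δ = 0)
    (e : Γ × Γ → Γ) (he : Injective e) (heJ : ∀ p, e p ∉ J) :
    ∃ U : Γ → (E →L[ℝ] lp (fun _ : Γ => ℝ) 2),
      LinearIndependent ℝ U ∧
      ∀ T ∈ W ⊔ Submodule.span ℝ (Set.range U), T ≠ 0 → ¬AbsolutelySumming T := by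
  classical
  have hmInj : ∀ γ : Γ, Injective (fun σ => e (σ, γ)) := by
    intro γ a b hab
    simpa using (he hab)
  set U : Γ → (E →L[ℝ] lp (fun _ : Γ => ℝ) 2) :=
    fun γ => (pushCLM (fun σ => e (σ, γ)) (hmInj γ)).comp T₀ with hUdef
  have k1 : ∀ (γ : Γ) (x : E) (σ : Γ),
      (U γ x : ∀ _ : Γ, ℝ) (e (σ, γ)) = (T₀ x : ∀ _ : Γ, ℝ) σ := by
    intro γ x σ
    show Function.extend (fun σ => e (σ, γ)) (⇑(T₀ x)) 0 ((fun σ => e (σ, γ)) σ) = _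
    rw [(hmInj γ).extend_apply]
  have k2 : ∀ (γ : Γ) (x : E) (δ : Γ), (¬∃ σ, e (σ, γ) = δ) →
      (U γ x : ∀ _ : Γ, ℝ) δ = 0 := by
    intro γ x δ h
    show Function.extend (fun σ => e (σ, γ)) (⇑(T₀ x)) 0 δ = 0
    rw [extend_apply' _ _ _ h]
    rfl
  have knorm : ∀ (γ : Γ) (x : E), ‖U γ x‖ = ‖T₀ x‖ := fun γ x =>
    pushLp_norm (fun σ => e (σ, γ)) (hmInj γ) (T₀ x)
  have ksum : ∀ (c : Γ →₀ ℝ) (x : E) (δ : Γ),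
      (((c.sum fun γ' a => a • U γ') x : lp (fun _ : Γ => ℝ) 2) : ∀ _ : Γ, ℝ) δ
        = ∑ γ' ∈ c.support, c γ' * ((U γ' x : ∀ _ : Γ, ℝ) δ) := by
    intro c x δ
    rw [Finsupp.sum, ContinuousLinearMap.sum_apply, lp.coeFn_sum, Finset.sum_apply]
    refine Finset.sum_congr rfl fun γ' _ => ?_
    rw [ContinuousLinearMap.smul_apply, lp.coeFn_smul, Pi.smul_apply, smul_eq_mul]
  have k3 : ∀ (c : Γ →₀ ℝ) (x : E) (σ γ : Γ),
      (((c.sum fun γ' a => a • U γ') x : lp (fun _ : Γ => ℝ) 2) : ∀ _ : Γ, ℝ) (e (σ, γ))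
        = c γ * (T₀ x : ∀ _ : Γ, ℝ) σ := by
    intro c x σ γ
    rw [ksum, Finset.sum_eq_single γ]
    · rw [k1]
    · intro b _ hb
      rw [k2 b x _ (fun ⟨σ', hσ'⟩ => hb (congrArg Prod.snd (he hσ'))), mul_zero]
    · intro hγ
      rw [Finsupp.notMem_support_iff.1 hγ, zero_mul]
  refine ⟨U, ?_, ?_⟩
  · -- linear independence
    rw [linearIndependent_iff]
    intro l hl
    by_contra hlne
    obtain ⟨γ, hγ⟩ := Finsupp.ne_iff.1 hlne
    rw [Finsupp.coe_zero, Pi.zero_apply] at hγ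
    have hT₀0 : T₀ ≠ 0 := fun h => hT₀ (by rw [h]; exact absolutelySumming_zero)
    have hx : ∃ x : E, T₀ x ≠ 0 := by
      by_contra h
      push_neg at h
      exact hT₀0 (ContinuousLinearMap.ext fun x => by simp [h x])
    obtain ⟨x, hx⟩ := hx
    have hσ : ∃ σ : Γ, (T₀ x : ∀ _ : Γ, ℝ) σ ≠ 0 := by
      by_contra h
      push_neg at h
      exact hx (lp.ext (funext fun σ => by simp [h σ]))
    obtain ⟨σ, hσ⟩ := hσ
    have := k3 l x σ γ
    rw [← Finsupp.linearCombination_apply, hl] at this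
    simp only [ContinuousLinearMap.zero_apply, lp.coeFn_zero, Pi.zero_apply] at this
    exact (mul_ne_zero hγ hσ) this.symm
  · -- membership
    intro T hT hTne
    obtain ⟨w, hw, u, hu, rfl⟩ := Submodule.mem_sup.1 hT
    obtain ⟨c, rfl⟩ := Finsupp.mem_span_range_iff_exists_finsupp.1 hu
    by_cases hc : c = 0
    · subst hc
      rw [Finsupp.sum_zero_index, add_zero] at hTne ⊢
      rcases hW hw with h | h
      · exact h
      · exact absurd h hTne
    · obtain ⟨γ, hγ⟩ := Finsupp.ne_iff.1 hc
      rw [Finsupp.coe_zero, Pi.zero_apply] at hγ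
      have habs : (0:ℝ) < |c γ| := abs_pos.2 hγ
      refine not_absolutelySumming_of_dominates T₀ _ |c γ|⁻¹ (fun x => ?_) hT₀
      have key : |c γ| * ‖T₀ x‖ ≤ ‖(w + c.sum fun γ' a => a • U γ') x‖ := by
        have h1 : ‖(c γ) • (U γ x)‖ ≤ ‖(w + c.sum fun γ' a => a • U γ') x‖ := by
          apply lp_norm_le_norm
          intro δ
          rcases em (∃ σ, e (σ, γ) = δ) with ⟨σ, rfl⟩ | hδ
          · have hwc : (w x : ∀ _ : Γ, ℝ) (e (σ, γ)) = 0 := hWJ w hw x _ (heJ (σ, γ))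
            have hrhs : (((w + c.sum fun γ' a => a • U γ') x :
                lp (fun _ : Γ => ℝ) 2) : ∀ _ : Γ, ℝ) (e (σ, γ))
                = c γ * (T₀ x : ∀ _ : Γ, ℝ) σ := by
              rw [ContinuousLinearMap.add_apply, lp.coeFn_add, Pi.add_apply, hwc, k3, zero_add]
            rw [hrhs, lp.coeFn_smul, Pi.smul_apply, smul_eq_mul, k1]
          · rw [lp.coeFn_smul, Pi.smul_apply, smul_eq_mul, k2 γ x δ hδ, mul_zero, norm_zero]
            exact norm_nonneg _
        rwa [norm_smul, Real.norm_eq_abs, knorm] at h1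
      calc ‖T₀ x‖ = |c γ|⁻¹ * (|c γ| * ‖T₀ x‖) := by
            rw [← mul_assoc, inv_mul_cancel₀ (ne_of_gt habs), one_mul]
        _ ≤ |c γ|⁻¹ * ‖(w + c.sum fun γ' a => a • U γ') x‖ :=
            mul_le_mul_of_nonneg_left key (inv_nonneg.2 (le_of_lt habs))

end Aux16

namespace Aux16

lemma rank_span_image {V : Type (max u w)} [AddCommGroup V] [Module ℝ V] {Γ : Type w}
    {U : Γ → V} (hU : LinearIndependent ℝ U) (t : Set Γ) :
    Module.rank ℝ ↥(Submodule.span ℝ (U '' t)) = Cardinal.lift.{u} #↥t := by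
  have hcomp : LinearIndependent ℝ (U ∘ (Subtype.val : t → Γ)) :=
    hU.comp _ Subtype.coe_injective
  have himg : Set.range (U ∘ (Subtype.val : t → Γ)) = U '' t := by
    rw [Set.range_comp, Subtype.range_coe]
  rw [← himg, rank_span hcomp]
  have h := Cardinal.mk_range_eq_of_injective hcomp.injective
  rw [Cardinal.lift_id'] at h
  rw [h]; exact congrFun Cardinal.lift_umax.{w, u} _

end Aux16

namespace Aux16

lemma aux_prod_card {X : Type (max u w)} {Y : Type u} :
    Cardinal.lift.{w} #((X × Y) × ℕ) = #X * Cardinal.lift.{w} #Y * ℵ₀ := by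
  simp only [Cardinal.mk_prod, Cardinal.mk_nat, Cardinal.lift_mul, Cardinal.lift_lift,
    Cardinal.lift_aleph0, Cardinal.lift_id', Cardinal.lift_umax]
  rw [Cardinal.lift_id'.{max u w, 0}]
  rw [congrFun Cardinal.lift_umax.{u, w} (#Y)]

lemma mk_iUnion_le_aux {ι : Type (max u w)} {Γ : Type w} (A : ι → Set Γ)
    (hAc : ∀ i, (A i).Countable) :
    Cardinal.lift.{u} #↥(⋃ i, A i) ≤ Cardinal.lift.{w} #(ι × ℕ) := by
  classical
  have hg : ∀ i, ∃ g : Γ → ℕ, ∀ δ δ', δ ∈ A i → δ' ∈ A i → g δ = g δ' → δ = δ' := by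
    intro i
    obtain ⟨g0, hg0⟩ := Set.countable_iff_exists_injective.1 (hAc i)
    refine ⟨fun δ => if h : δ ∈ A i then g0 ⟨δ, h⟩ else 0, ?_⟩
    intro δ δ' h h' heq
    dsimp only at heq
    rw [dif_pos h, dif_pos h'] at heq
    exact Subtype.ext_iff.1 (hg0 heq)
  choose g hginj using hg
  have hmem : ∀ δ : ↥(⋃ i, A i), ∃ i, (δ : Γ) ∈ A i := fun δ => Set.mem_iUnion.1 δ.2
  have hFinj : Function.Injective
      (fun δ : ↥(⋃ i, A i) => ((hmem δ).choose, g (hmem δ).choose (δ : Γ))) := by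
    intro δ δ' hval
    have h1 : (hmem δ).choose = (hmem δ').choose := congrArg Prod.fst hval
    have h2 : g (hmem δ).choose (δ : Γ) = g (hmem δ').choose (δ' : Γ) :=
      congrArg Prod.snd hval
    rw [← h1] at h2
    have hm' : (δ' : Γ) ∈ A (hmem δ).choose := h1 ▸ (hmem δ').choose_spec
    exact Subtype.ext (hginj _ _ _ (hmem δ).choose_spec hm' h2)
  have hle := Cardinal.lift_mk_le_lift_mk_of_injective hFinj
  calc Cardinal.lift.{u} #↥(⋃ i, A i) = Cardinal.lift.{max u w} #↥(⋃ i, A i) :=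
        (congrFun Cardinal.lift_umax.{w, u} _).symm
    _ ≤ _ := hle

lemma exists_smallJ {E : Type u} [NormedAddCommGroup E] [NormedSpace ℝ E] {Γ : Type w}
    (W : Submodule ℝ (E →L[ℝ] lp (fun _ : Γ => ℝ) 2)) :
    ∃ J : Set Γ, (∀ w ∈ W, ∀ x : E, ∀ δ ∉ J, (w x : ∀ _ : Γ, ℝ) δ = 0) ∧
      Cardinal.lift.{u} #↥J ≤
        Module.rank ℝ ↥W * Cardinal.lift.{w} (Module.rank ℝ E) * ℵ₀ := by
  classical
  let bW := Module.Basis.ofVectorSpace ℝ ↥W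
  let bE := Module.Basis.ofVectorSpace ℝ E
  let A : (↥(Module.Basis.ofVectorSpaceIndex ℝ ↥W) × ↥(Module.Basis.ofVectorSpaceIndex ℝ E)) → Set Γ :=
    fun p => {δ | (((bW p.1 : ↥W) : E →L[ℝ] lp (fun _ : Γ => ℝ) 2) (bE p.2) : ∀ _ : Γ, ℝ) δ ≠ 0}
  have hAc : ∀ p, (A p).Countable := by
    intro p
    have hsum := (lp.memℓp (((bW p.1 : ↥W) : E →L[ℝ] lp (fun _ : Γ => ℝ) 2) (bE p.2))).summable tp
    refine hsum.countable_support.mono ?_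
    intro δ hδ
    simp only [Function.mem_support]
    intro h0
    apply hδ
    show ((((bW p.1 : ↥W) : E →L[ℝ] lp (fun _ : Γ => ℝ) 2) (bE p.2)) : ∀ _ : Γ, ℝ) δ = 0
    by_contra hn
    have hpos : 0 < ‖((((bW p.1 : ↥W) : E →L[ℝ] lp (fun _ : Γ => ℝ) 2) (bE p.2)) : ∀ _ : Γ, ℝ) δ‖ :=
      norm_pos_iff.2 hn
    exact absurd h0 (ne_of_gt (Real.rpow_pos_of_pos hpos _))
  refine ⟨⋃ p, A p, ?_, ?_⟩
  · intro w hw x δ hδ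
    have hδ' : ∀ p : ↥(Module.Basis.ofVectorSpaceIndex ℝ ↥W) × ↥(Module.Basis.ofVectorSpaceIndex ℝ E),
        (((bW p.1 : ↥W) : E →L[ℝ] lp (fun _ : Γ => ℝ) 2) (bE p.2) : ∀ _ : Γ, ℝ) δ = 0 := by
      intro p
      by_contra h
      exact hδ (Set.mem_iUnion.2 ⟨p, h⟩)
    have s1 : ∀ (i : ↥(Module.Basis.ofVectorSpaceIndex ℝ ↥W)) (x : E),
        (((bW i : ↥W) : E →L[ℝ] lp (fun _ : Γ => ℝ) 2) x : ∀ _ : Γ, ℝ) δ = 0 := by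
      intro i x
      have hx : x ∈ Submodule.span ℝ (Set.range bE) := by rw [bE.span_eq]; trivial
      induction hx using Submodule.span_induction with
      | mem y hy =>
        obtain ⟨k, rfl⟩ := hy
        exact hδ' (i, k)
      | zero => rw [map_zero, lp.coeFn_zero, Pi.zero_apply]
      | add y z hy hz hpy hpz => rw [map_add, lp.coeFn_add, Pi.add_apply, hpy, hpz, add_zero]
      | smul a y hy hpy => rw [map_smul, lp.coeFn_smul, Pi.smul_apply, hpy, smul_zero]
    have s2 : ∀ v : ↥W, ∀ x : E,
        (((v : ↥W) : E →L[ℝ] lp (fun _ : Γ => ℝ) 2) x : ∀ _ : Γ, ℝ) δ = 0 := by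
      intro v
      have hv : v ∈ Submodule.span ℝ (Set.range bW) := by rw [bW.span_eq]; trivial
      induction hv using Submodule.span_induction with
      | mem y hy =>
        obtain ⟨i, rfl⟩ := hy
        exact s1 i
      | zero =>
        intro x
        rw [Submodule.coe_zero, ContinuousLinearMap.zero_apply, lp.coeFn_zero, Pi.zero_apply]
      | add y z hy hz hpy hpz =>
        intro x
        rw [Submodule.coe_add, ContinuousLinearMap.add_apply, lp.coeFn_add, Pi.add_apply,
          hpy x, hpz x, add_zero]
      | smul a y hy hpy =>
        intro x
        rw [Submodule.coe_smul, ContinuousLinearMap.smul_apply, lp.coeFn_smul, Pi.smul_apply,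
          hpy x, smul_zero]
    exact s2 ⟨w, hw⟩ x
  · calc Cardinal.lift.{u} #↥(⋃ p, A p)
        ≤ Cardinal.lift.{w}
            #((↥(Module.Basis.ofVectorSpaceIndex ℝ ↥W) × ↥(Module.Basis.ofVectorSpaceIndex ℝ E)) × ℕ) :=
          mk_iUnion_le_aux A hAc
      _ = #↥(Module.Basis.ofVectorSpaceIndex ℝ ↥W)
            * Cardinal.lift.{w} #↥(Module.Basis.ofVectorSpaceIndex ℝ E) * ℵ₀ := aux_prod_card
      _ = Module.rank ℝ ↥W * Cardinal.lift.{w} (Module.rank ℝ E) * ℵ₀ := by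
          rw [Module.Basis.mk_eq_rank'' bW, Module.Basis.mk_eq_rank'' bE]

end Aux16

/-- Let `E` be an infinite-dimensional real Banach space, `Γ` an index set with
`card Γ > 𝔠` and `dim E < card Γ`, and `H = ℓ₂(Γ)`. If the set `𝓛(E; H) \ Π₁(E; H)` of
continuous linear operators from `E` to `H` that are not absolutely summing is nonempty, then
it is `(α, card Γ)`-lineable in the space of continuous linear operators from `E` to `H` for
every cardinal `α < card Γ` (with universe lifts to compare cardinals). -/
theorem statement16 (E : Type u) [NormedAddCommGroup E] [NormedSpace ℝ E] [CompleteSpace E]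
    (hE : ¬FiniteDimensional ℝ E) (Γ : Type w)
    (hΓ : Cardinal.continuum < Cardinal.mk Γ)
    (hEΓ : Cardinal.lift.{w} (Module.rank ℝ E) < Cardinal.lift.{u} (Cardinal.mk Γ))
    (hne : ∃ T : E →L[ℝ] lp (fun _ : Γ => ℝ) 2, ¬AbsolutelySumming T)
    (α : Cardinal.{max u w}) (hα : α < Cardinal.lift.{u} (Cardinal.mk Γ)) :
    ABLineable {T : E →L[ℝ] lp (fun _ : Γ => ℝ) 2 | ¬AbsolutelySumming T}
      α (Cardinal.lift.{u} (Cardinal.mk Γ)) := by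
  classical
  obtain ⟨T₀, hT₀⟩ := hne
  have hℵ : ℵ₀ < #Γ := lt_of_le_of_lt Cardinal.aleph0_le_continuum hΓ
  have hinfΓ : Infinite Γ := Cardinal.infinite_iff.2 hℵ.le
  have hβinf : ℵ₀ ≤ Cardinal.lift.{u} #Γ := Cardinal.aleph0_le_lift.2 hℵ.le
  have hβaleph : ℵ₀ < Cardinal.lift.{u} #Γ := Cardinal.aleph0_lt_lift.2 hℵ
  have hcardprod : #(Γ × Γ) = #Γ := by
    rw [Cardinal.mk_prod]
    simpa using Cardinal.mul_eq_self hℵ.le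
  constructor
  · -- Lineable part
    obtain ⟨eqv⟩ := Cardinal.eq.1 hcardprod
    obtain ⟨U, hUli, hUmem⟩ := Aux16.main T₀ hT₀ ⊥
      (by rw [Submodule.bot_coe]; exact Set.subset_union_right)
      ∅
      (by
        intro w hw x δ _
        rw [Submodule.mem_bot] at hw
        subst hw
        rw [ContinuousLinearMap.zero_apply, lp.coeFn_zero, Pi.zero_apply])
      eqv eqv.injective (fun p => Set.notMem_empty _)
    obtain ⟨α', hα'⟩ := Cardinal.mem_range_lift_of_le hα.le
    have hα'le : α' ≤ #Γ := Cardinal.lift_le.1 (hα' ▸ hα.le)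
    obtain ⟨t, ht⟩ := Cardinal.le_mk_iff_exists_set.1 hα'le
    refine ⟨Submodule.span ℝ (U '' t), ?_, ?_⟩
    · rw [Aux16.rank_span_image hUli t, ht, hα']
    · intro T hT
      by_cases hT0 : T = 0
      · right; simp [hT0]
      · left
        exact hUmem T
          (Submodule.mem_sup_right (Submodule.span_mono (Set.image_subset_range U t) hT)) hT0
  · -- (α, β) part
    intro W hrkW hWsub
    obtain ⟨J, hJvan, hJle⟩ := Aux16.exists_smallJ W
    have hJlt : #↥J < #Γ := by
      refine Cardinal.lift_lt.1 (lt_of_le_of_lt hJle ?_)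
      refine Cardinal.mul_lt_of_lt hβinf (Cardinal.mul_lt_of_lt hβinf ?_ hEΓ) hβaleph
      rw [hrkW]; exact hα
    have hcompl : #↥(Jᶜ) = #Γ := Cardinal.mk_compl_of_infinite J hJlt
    obtain ⟨eqv⟩ := Cardinal.eq.1 (hcardprod.trans hcompl.symm)
    have heinj : Function.Injective (fun p : Γ × Γ => ((eqv p : ↥(Jᶜ)) : Γ)) :=
      Subtype.coe_injective.comp eqv.injective
    obtain ⟨U, hUli, hUmem⟩ := Aux16.main T₀ hT₀ W hWsub J hJvan
      (fun p : Γ × Γ => ((eqv p : ↥(Jᶜ)) : Γ)) heinj (fun p => (eqv p).2)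
    have hspan : Module.rank ℝ ↥(Submodule.span ℝ (Set.range U)) = Cardinal.lift.{u} #Γ := by
      have h := Aux16.rank_span_image hUli Set.univ
      rw [Set.image_univ] at h
      rw [h, Cardinal.mk_univ]
    refine ⟨W ⊔ Submodule.span ℝ (Set.range U), le_sup_left, ?_, ?_⟩
    · apply le_antisymm
      · refine le_trans (Submodule.rank_add_le_rank_add_rank W _) ?_
        rw [hrkW, hspan]
        exact le_of_eq (Cardinal.add_eq_right hβinf hα.le)
      · rw [← hspan]
        exact Submodule.rank_mono le_sup_right
    · intro T hT
      by_cases h0 : T = 0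
      · right; simp [h0]
      · left; exact hUmem T hT h0
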